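/- Let S be a slice of an LBFS of a graph G with maximal subslices x, S_1, ..., S_k in order. Then every vertex y ∈ S_i is either adjacent to all vertices of S_j or to no vertex of S_j, for every j > i. -/

import Mathlib

/-- The LBFS label of vertex `v` just before step `t`: for each earlier step `i < t`
(in increasing order of `i`) at which a neighbour of `v` was explored, the value `n - i`
is appended. -/
def lbfsLabel {V : Type*} (G : SimpleGraph V) [DecidableRel G.Adj] (σ : ℕ → V)
    (n t : ℕ) (v : V) : List ℕ :=
  ((List.range t).filter (fun i => decide (G.Adj (σ i) v))).map (fun i => n - i)

/-- `σ` (restricted to `[0,n)`) is a Lexicographic Breadth-First Search ordering of `G`: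
it enumerates all vertices, and at each step the chosen vertex has lexicographically
largest label among the unexplored vertices. -/
def IsLBFS {V : Type*} (G : SimpleGraph V) [DecidableRel G.Adj] (n : ℕ) (σ : ℕ → V) : Prop :=
  Set.BijOn σ (Set.Iio n) Set.univ ∧
    ∀ t < n, ∀ v : V, (∀ i < t, σ i ≠ v) →
      ¬ List.Lex (· < ·) (lbfsLabel G σ n t (σ t)) (lbfsLabel G σ n t v)

/-- The slice defined at step `t`: the unexplored vertices sharing the (lexicographically
largest) label of the chosen vertex `σ t` just before step `t`. -/
def sliceAt {V : Type*} (G : SimpleGraph V) [DecidableRel G.Adj] (σ : ℕ → V) (n t : ℕ) :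
    Set V :=
  {v | (∀ i < t, σ i ≠ v) ∧ lbfsLabel G σ n t v = lbfsLabel G σ n t (σ t)}

/-- `S` is a slice of the LBFS. -/
def IsSlice {V : Type*} (G : SimpleGraph V) [DecidableRel G.Adj] (σ : ℕ → V) (n : ℕ)
    (S : Set V) : Prop :=
  ∃ t < n, S = sliceAt G σ n t

/-- The slice defined at step `u` is a maximal (proper) subslice of the slice at step `t`. -/
def IsMaxSubsliceAt {V : Type*} (G : SimpleGraph V) [DecidableRel G.Adj] (σ : ℕ → V)
    (n t u : ℕ) : Prop :=
  u < n ∧ sliceAt G σ n u ⊂ sliceAt G σ n t ∧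
    ∀ w < n, ¬(sliceAt G σ n u ⊂ sliceAt G σ n w ∧ sliceAt G σ n w ⊂ sliceAt G σ n t)

/-- `u 1, …, u k` are the steps defining the maximal subslices `S_1, …, S_k` of the slice
at step `t`, listed in the order the LBFS defines them (the initial vertex `σ t`, as a
singleton, being by convention the zeroth maximal subslice). -/
def MaxSubsliceEnum {V : Type*} (G : SimpleGraph V) [DecidableRel G.Adj] (σ : ℕ → V)
    (n t k : ℕ) (u : ℕ → ℕ) : Prop :=
  (∀ i, 1 ≤ i → i ≤ k → IsMaxSubsliceAt G σ n t (u i)) ∧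
  (∀ i j, 1 ≤ i → i < j → j ≤ k → u i < u j) ∧
  (∀ i, 1 ≤ i → i ≤ k → t < u i) ∧
  (∀ w, w < n → IsMaxSubsliceAt G σ n t w →
    ∃ i, 1 ≤ i ∧ i ≤ k ∧ sliceAt G σ n w = sliceAt G σ n (u i))

/-- The edge `ab` is active for the slice at step `t`: both endpoints lie in that slice
but in different maximal subslices of it (i.e. no maximal subslice contains both). -/
def activeFor {V : Type*} (G : SimpleGraph V) [DecidableRel G.Adj] (σ : ℕ → V)
    (n t : ℕ) (a b : V) : Prop :=
  G.Adj a b ∧ a ∈ sliceAt G σ n t ∧ b ∈ sliceAt G σ n t ∧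
    ∀ w, IsMaxSubsliceAt G σ n t w → ¬(a ∈ sliceAt G σ n w ∧ b ∈ sliceAt G σ n w)
section helpers
variable {V : Type*} (G : SimpleGraph V) [DecidableRel G.Adj] (σ : ℕ → V) (n : ℕ)

/-- generic lex append lemma -/
lemma my_lex_append {l₁ l₂ t₁ t₂ : List ℕ} (h : List.Lex (·<·) l₁ l₂)
    (hb : ∀ x ∈ t₁, ∀ y ∈ l₂, x < y) :
    List.Lex (·<·) (l₁ ++ t₁) (l₂ ++ t₂) := by
  induction h with
  | nil =>
    rename_i b bs
    cases t₁ with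
    | nil => exact List.Lex.nil
    | cons x xs =>
      exact List.Lex.rel (hb x (by simp) b (by simp))
  | @cons a l₁' l₂' h ih =>
    exact List.Lex.cons (ih (fun x hx y hy => hb x hx y (by simp [hy])))
  | rel h => exact List.Lex.rel h

/-- label at a later step is label at an earlier step with smaller stuff appended -/
lemma label_decomp (s s' : ℕ) (h : s ≤ s') (v : V) :
    lbfsLabel G σ n s' v = lbfsLabel G σ n s v ++
      (((List.range' s (s'-s)).filter (fun i => decide (G.Adj (σ i) v))).map (fun i => n - i)) := by
  unfold lbfsLabel
  rw [← List.map_append, ← List.filter_append]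
  congr 1
  rw [List.range_eq_range', List.range_eq_range']
  have h2 := List.range'_append (s := 0) (m := s) (n := s'-s) (step := 1)
  simp only [Nat.one_mul, Nat.zero_add] at h2
  congr 1
  rw [h2]
  congr 1
  omega

lemma lex_mono (s s' : ℕ) (hss' : s ≤ s') (hs'n : s' ≤ n) (a b : V)
    (h : List.Lex (·<·) (lbfsLabel G σ n s a) (lbfsLabel G σ n s b)) :
    List.Lex (·<·) (lbfsLabel G σ n s' a) (lbfsLabel G σ n s' b) := by
  rw [label_decomp G σ n s s' hss' a, label_decomp G σ n s s' hss' b]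
  apply my_lex_append h
  intro x hx y hy
  simp only [lbfsLabel, List.mem_map, List.mem_filter, List.mem_range, List.mem_range'] at hx hy
  obtain ⟨m, ⟨hm, _⟩, rfl⟩ := hx
  obtain ⟨m', ⟨hm', _⟩, rfl⟩ := hy
  obtain ⟨q, hq, rfl⟩ := hm
  omega

/-- label equality at step s' determines adjacency to all explored vertices -/
lemma label_eq_adj (s' : ℕ) (hs' : s' ≤ n) (a b : V)
    (h : lbfsLabel G σ n s' a = lbfsLabel G σ n s' b) :
    ∀ m < s', (G.Adj (σ m) a ↔ G.Adj (σ m) b) := by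
  have key : (List.range s').filter (fun i => decide (G.Adj (σ i) a)) =
      (List.range s').filter (fun i => decide (G.Adj (σ i) b)) := by
    have h2 := congrArg (List.map (fun x => n - x)) h
    simp only [lbfsLabel, List.map_map] at h2
    have e1 : ∀ (p : ℕ → Bool), List.map ((fun x => n - x) ∘ (fun i => n - i))
        ((List.range s').filter p) = (List.range s').filter p := by
      intro p
      rw [show List.map ((fun x => n - x) ∘ fun i => n - i) ((List.range s').filter p)
          = List.map id ((List.range s').filter p) from
        List.map_congr_left (fun a ha => by
          have : a < s' := List.mem_range.1 (List.mem_of_mem_filter ha)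
          simp only [Function.comp, id]; omega), List.map_id]
    rw [e1, e1] at h2
    exact h2
  intro m hm
  have := congrArg (fun l => m ∈ l) key
  simp only [List.mem_filter, List.mem_range, eq_iff_iff, decide_eq_true_eq] at this
  constructor
  · intro hadj; exact ((this.1 ⟨hm, hadj⟩).2)
  · intro hadj; exact ((this.2 ⟨hm, hadj⟩).2)

lemma adj_label_eq (s : ℕ) (a b : V)
    (h : ∀ m < s, (G.Adj (σ m) a ↔ G.Adj (σ m) b)) :
    lbfsLabel G σ n s a = lbfsLabel G σ n s b := by
  unfold lbfsLabel
  congr 1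
  apply List.filter_congr
  intro x hx
  have : x < s := List.mem_range.1 hx
  simp [h x this]

lemma lex_trichotomy (l l' : List ℕ) :
    List.Lex (·<·) l l' ∨ l = l' ∨ List.Lex (·<·) l' l :=
  @trichotomous _ (List.Lex (·<·)) (List.Lex.trichotomous _) l l'

end helpers


section helpers2
variable {V : Type*} (G : SimpleGraph V) [DecidableRel G.Adj] (σ : ℕ → V) (n : ℕ)

lemma slice_nested (s s' : ℕ) (hss' : s ≤ s') (hs'n : s' ≤ n) (a : V)
    (ha : a ∈ sliceAt G σ n s) (ha' : a ∈ sliceAt G σ n s') :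
    sliceAt G σ n s' ⊆ sliceAt G σ n s := by
  intro w hw
  refine ⟨fun m hm => hw.1 m (hm.trans_le hss'), ?_⟩
  have h1 : lbfsLabel G σ n s' w = lbfsLabel G σ n s' a := hw.2.trans ha'.2.symm
  have h2 := label_eq_adj G σ n s' hs'n w a h1
  have h3 : lbfsLabel G σ n s w = lbfsLabel G σ n s a :=
    adj_label_eq G σ n s w a (fun m hm => h2 m (hm.trans_le hss'))
  exact h3.trans ha.2

end helpers2

/-- every vertex of a maximal subslice `S_i` is universal to or isolated
from each later maximal subslice `S_j`. -/
theorem subslice_universal_or_isolated {V : Type*} (G : SimpleGraph V) [DecidableRel G.Adj]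
    (n : ℕ) (σ : ℕ → V) (hL : IsLBFS G n σ) (t : ℕ) (ht : t < n)
    (k : ℕ) (u : ℕ → ℕ) (hu : MaxSubsliceEnum G σ n t k u) :
    ∀ i j, 1 ≤ i → i < j → j ≤ k → ∀ y ∈ sliceAt G σ n (u i),
      (∀ z ∈ sliceAt G σ n (u j), G.Adj y z) ∨
      (∀ z ∈ sliceAt G σ n (u j), ¬ G.Adj y z) := by
  obtain ⟨hbij, hlbfs⟩ := hL
  have hinj := hbij.injOn
  intro i j h1i hij hjk y hy
  have hmi := hu.1 i h1i (le_of_lt (lt_of_lt_of_le hij hjk))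
  have hmj := hu.1 j (le_trans h1i (le_of_lt hij)) hjk
  have huij : u i < u j := hu.2.1 i j h1i hij hjk
  have huin : u i < n := hmi.1
  have hujn : u j < n := hmj.1
  by_cases hexp : ∀ m < u j, σ m ≠ y
  · exfalso
    have hzj_unexp : ∀ m < u j, σ m ≠ σ (u j) := by
      intro m hm heq
      have : m = u j := hinj (show m ∈ Set.Iio n by exact lt_trans hm hujn)
        (show u j ∈ Set.Iio n from hujn) heq
      omega
    have hzj_slice : σ (u j) ∈ sliceAt G σ n (u j) := ⟨hzj_unexp, rfl⟩
    have hzj_unexp_i : ∀ m < u i, σ m ≠ σ (u j) := fun m hm => hzj_unexp m (lt_trans hm huij)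
    have hzj_not : σ (u j) ∉ sliceAt G σ n (u i) := by
      intro hmem
      have hsub := slice_nested G σ n (u i) (u j) (le_of_lt huij) (le_of_lt hujn)
        (σ (u j)) hmem hzj_slice
      rcases hsub.ssubset_or_eq with hss | heq
      · exact hmj.2.2 (u i) huin ⟨hss, hmi.2.1⟩
      · have hui_unexp : ∀ m < u i, σ m ≠ σ (u i) := by
          intro m hm heq2
          have : m = u i := hinj (show m ∈ Set.Iio n from lt_trans hm huin)
            (show u i ∈ Set.Iio n from huin) heq2
          omega
        have : σ (u i) ∈ sliceAt G σ n (u j) := heq ▸ (⟨hui_unexp, rfl⟩ : σ (u i) ∈ sliceAt G σ n (u i))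
        exact this.1 (u i) huij rfl
    have hnotlex_i := hlbfs (u i) huin (σ (u j)) hzj_unexp_i
    rcases lex_trichotomy (lbfsLabel G σ n (u i) (σ (u j))) (lbfsLabel G σ n (u i) (σ (u i)))
      with hlt | heq | hgt
    · have hyl : lbfsLabel G σ n (u i) y = lbfsLabel G σ n (u i) (σ (u i)) := hy.2
      rw [← hyl] at hlt
      have hlt' := lex_mono G σ n (u i) (u j) (le_of_lt huij) (le_of_lt hujn) (σ (u j)) y hlt
      exact hlbfs (u j) hujn y hexp hlt'
    · exact hzj_not ⟨hzj_unexp_i, heq⟩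
    · exact hnotlex_i hgt
  · push_neg at hexp
    obtain ⟨m, hm, hσm⟩ := hexp
    by_cases hadj : G.Adj y (σ (u j))
    · left
      intro z hz
      have h2 := label_eq_adj G σ n (u j) (le_of_lt hujn) z (σ (u j)) hz.2 m hm
      rw [hσm] at h2
      exact h2.2 hadj
    · right
      intro z hz hadjz
      have h2 := label_eq_adj G σ n (u j) (le_of_lt hujn) z (σ (u j)) hz.2 m hm
      rw [hσm] at h2
      exact hadj (h2.1 hadjz)
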